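/- arXiv:1803.05013 — 2 statements merged into one kernel-verified Lean document; each statement's English description precedes it below -/
import Mathlib

section
/- (Relation between left ABR and ABC derivatives) Let 0 < α < 1, B(α) > 0, and let f : [0,b] → ℝ be continuously differentiable. Then ^{ABC}_0 D^α f(t) = ^{ABR}_0 D^α f(t) − (B(α)/(1-α)) f(0) E_α(-(α/(1-α)) t^α) for t ∈ (0,b). -/
open intervalIntegral

/-- One-parameter Mittag-Leffler function. -/
noncomputable def mittagLeffler (α z : ℝ) : ℝ :=
  ∑' k : ℕ, z ^ k / Real.Gamma (α * k + 1)

/-- Left ABC fractional derivative with Mittag-Leffler kernel (base point `a`). -/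
noncomputable def ABCleft (B α a : ℝ) (f : ℝ → ℝ) (t : ℝ) : ℝ :=
  (B / (1 - α)) * ∫ s in a..t, deriv f s * mittagLeffler α (-(α / (1 - α)) * (t - s) ^ α)

/-- Left ABR fractional derivative with Mittag-Leffler kernel (base point `a`). -/
noncomputable def ABRleft (B α a : ℝ) (f : ℝ → ℝ) (t : ℝ) : ℝ :=
  (B / (1 - α)) *
    deriv (fun x => ∫ s in a..x, f s * mittagLeffler α (-(α / (1 - α)) * (x - s) ^ α)) t


open Set Filter MeasureTheory Metric in
private lemma gamma_factorial_lower :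
    ∃ c > 0, (c ≤ 1) ∧ ∀ (n : ℕ) (s : ℝ), 1 ≤ s → s ≤ 2 → (n.factorial : ℝ) * c ≤ Real.Gamma (s + n) := by
  obtain ⟨x₀, hx₀mem, hx₀⟩ := isCompact_Icc.exists_isMinOn (s := Icc (1:ℝ) 2)
      (nonempty_Icc.mpr one_le_two)
      (fun x hx => by
        refine (Real.differentiableAt_Gamma fun m => ?_).continuousAt.continuousWithinAt
        have h1 : (0:ℝ) < x := lt_of_lt_of_le one_pos hx.1
        have h2 : -(m:ℝ) ≤ 0 := neg_nonpos.mpr (Nat.cast_nonneg m)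
        intro h; rw [h] at h1; linarith)
  have hc : 0 < Real.Gamma x₀ := Real.Gamma_pos_of_pos (lt_of_lt_of_le one_pos hx₀mem.1)
  refine ⟨Real.Gamma x₀, hc, ?_, ?_⟩
  · have := hx₀ (a := (1:ℝ)) ⟨le_rfl, one_le_two⟩
    simpa [Real.Gamma_one] using this
  intro n
  induction n with
  | zero =>
    intro s hs1 hs2
    simpa using hx₀ (a := s) ⟨hs1, hs2⟩
  | succ n ih =>
    intro s hs1 hs2
    have hpos : (0:ℝ) < s + n := by positivity
    have : Real.Gamma (s + (n + 1)) = (s + n) * Real.Gamma (s + n) := by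
      rw [show s + ((n : ℝ) + 1) = (s + n) + 1 by ring, Real.Gamma_add_one hpos.ne']
    push_cast
    rw [this]
    have h1 : ((n:ℝ) + 1) * ((n.factorial : ℝ) * Real.Gamma x₀) ≤ (s + n) * Real.Gamma (s + n) := by
      have h2 := ih s hs1 hs2
      have h3 : (n:ℝ) + 1 ≤ s + n := by linarith
      have h4 : (0:ℝ) ≤ (n:ℝ) + 1 := by positivity
      calc ((n:ℝ) + 1) * ((n.factorial : ℝ) * Real.Gamma x₀)
          ≤ (s + n) * ((n.factorial : ℝ) * Real.Gamma x₀) := by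
            apply mul_le_mul_of_nonneg_right h3 (by positivity)
        _ ≤ (s + n) * Real.Gamma (s + n) := mul_le_mul_of_nonneg_left h2 hpos.le
    calc ((n+1).factorial : ℝ) * Real.Gamma x₀ = ((n:ℝ)+1) * ((n.factorial : ℝ) * Real.Gamma x₀) := by
          push_cast [Nat.factorial_succ]; ring
      _ ≤ (s + n) * Real.Gamma (s + n) := h1

private lemma ml_summable {α : ℝ} (hα0 : 0 < α) {R : ℝ} (hR : 0 ≤ R) :
    Summable (fun k : ℕ => R ^ k / Real.Gamma (α * k + 1)) := by
  obtain ⟨c, hc, -, hgam⟩ := gamma_factorial_lower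
  set q : ℝ := max 1 ((2 * R + 1) ^ (1 / α)) with hq
  have hq1 : (1:ℝ) ≤ q := le_max_left _ _
  have hq0 : (0:ℝ) < q := lt_of_lt_of_le one_pos hq1
  have h2R : (0:ℝ) ≤ 2 * R + 1 := by linarith
  have hqα : 2 * R + 1 ≤ q ^ (α : ℝ) := by
    have h1 : ((2 * R + 1) ^ (1 / α)) ^ (α:ℝ) = 2 * R + 1 := by
      rw [← Real.rpow_mul h2R, one_div_mul_cancel hα0.ne', Real.rpow_one]
    calc 2 * R + 1 = ((2 * R + 1) ^ (1 / α)) ^ (α:ℝ) := h1.symm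
      _ ≤ q ^ (α:ℝ) := Real.rpow_le_rpow (Real.rpow_nonneg h2R _) (le_max_right _ _) hα0.le
  have hqαpos : (0:ℝ) < q ^ (α:ℝ) := Real.rpow_pos_of_pos hq0 _
  have key : ∀ k : ℕ, R ^ k / Real.Gamma (α * k + 1)
      ≤ (Real.exp q * q / c) * (1/2) ^ k := by
    intro k
    set x : ℝ := α * k + 1 with hx
    have hαk : (0:ℝ) ≤ α * k := by positivity
    have hx1 : 1 ≤ x := by simp [hx]; linarith
    have hx0 : 0 ≤ x := by linarith
    have hfl1 : 1 ≤ ⌊x⌋₊ := Nat.le_floor (by exact_mod_cast hx1)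
    set n : ℕ := ⌊x⌋₊ - 1 with hn
    have hncast : (n : ℝ) = (⌊x⌋₊ : ℝ) - 1 := by
      rw [hn, Nat.cast_sub hfl1]; norm_num
    set s : ℝ := x - n with hs
    have hfloor_le : (⌊x⌋₊ : ℝ) ≤ x := Nat.floor_le hx0
    have hlt : x < (⌊x⌋₊ : ℝ) + 1 := Nat.lt_floor_add_one x
    have hs1 : 1 ≤ s := by rw [hs, hncast]; linarith
    have hs2 : s ≤ 2 := by rw [hs, hncast]; linarith
    have hxsn : x = s + n := by rw [hs]; ring
    have hΓ : (n.factorial : ℝ) * c ≤ Real.Gamma x := by rw [hxsn]; exact hgam n s hs1 hs2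
    have hfact : q ^ (x - 2) / Real.exp q ≤ (n.factorial : ℝ) := by
      have h1 : q ^ n / Real.exp q ≤ (n.factorial : ℝ) := by
        rw [div_le_iff₀ (Real.exp_pos q)]
        have := Real.pow_div_factorial_le_exp (x := q) hq0.le n
        rw [div_le_iff₀ (by positivity : (0:ℝ) < (n.factorial : ℝ))] at this
        linarith [this]
      have h2 : q ^ (x - 2 : ℝ) ≤ q ^ (n:ℕ) := by
        rw [← Real.rpow_natCast q n]
        apply Real.rpow_le_rpow_of_exponent_le hq1
        rw [hncast]; linarith
      calc q ^ (x-2:ℝ) / Real.exp q ≤ q ^ n / Real.exp q := by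
            exact div_le_div_of_nonneg_right h2 (Real.exp_pos q).le
        _ ≤ (n.factorial : ℝ) := h1
    have hΓ2 : c * q ^ (x - 2 : ℝ) / Real.exp q ≤ Real.Gamma x := by
      calc c * q ^ (x-2:ℝ) / Real.exp q = (q ^ (x-2:ℝ) / Real.exp q) * c := by ring
        _ ≤ (n.factorial : ℝ) * c := by
            apply mul_le_mul_of_nonneg_right hfact hc.le
        _ ≤ Real.Gamma x := hΓ
    have hΓpos : 0 < Real.Gamma x := Real.Gamma_pos_of_pos (by linarith)
    have hDpos : 0 < c * q ^ (x - 2 : ℝ) / Real.exp q := by positivity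
    have step1 : R ^ k / Real.Gamma x ≤ R ^ k / (c * q ^ (x-2:ℝ) / Real.exp q) :=
      div_le_div_of_nonneg_left (by positivity) hDpos hΓ2
    have hqx : q ^ (x - 2 : ℝ) = (q ^ (α:ℝ)) ^ k / q := by
      have : (x - 2 : ℝ) = α * k - 1 := by rw [hx]; ring
      rw [this, Real.rpow_sub hq0, Real.rpow_one, Real.rpow_mul hq0.le, Real.rpow_natCast]
    have step2 : R ^ k / (c * q ^ (x-2:ℝ) / Real.exp q)
        = (Real.exp q * q / c) * (R / q ^ (α:ℝ)) ^ k := by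
      rw [hqx, div_pow]
      field_simp
    have step3 : (R / q ^ (α:ℝ)) ^ k ≤ (1/2 : ℝ) ^ k := by
      apply pow_le_pow_left₀ (by positivity)
      calc R / q ^ (α:ℝ) ≤ R / (2 * R + 1) :=
            div_le_div_of_nonneg_left hR (by linarith) hqα
        _ ≤ 1 / 2 := by rw [div_le_div_iff₀ (by linarith) (by norm_num)]; linarith
    calc R ^ k / Real.Gamma x ≤ R ^ k / (c * q ^ (x-2:ℝ) / Real.exp q) := step1
      _ = (Real.exp q * q / c) * (R / q ^ (α:ℝ)) ^ k := step2
      _ ≤ (Real.exp q * q / c) * (1/2) ^ k := by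
          apply mul_le_mul_of_nonneg_left step3 (by positivity)
  refine Summable.of_nonneg_of_le (fun k => by positivity) key ?_
  exact (summable_geometric_of_lt_one (by norm_num) (by norm_num)).mul_left _

open Metric in
private lemma ml_continuous {α : ℝ} (hα0 : 0 < α) : Continuous (mittagLeffler α) := by
  rw [continuous_iff_continuousAt]
  intro z
  have hcont : ContinuousOn (fun x : ℝ => ∑' k : ℕ, x ^ k / Real.Gamma (α * k + 1))
      (ball 0 (|z| + 1)) := by
    apply continuousOn_tsum (u := fun k : ℕ => (|z| + 1) ^ k / Real.Gamma (α * k + 1))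
    · exact fun k => ((continuous_pow k).div_const _).continuousOn
    · exact ml_summable hα0 (by positivity)
    · intro k x hx
      have hΓ : 0 < Real.Gamma (α * k + 1) := Real.Gamma_pos_of_pos (by positivity)
      rw [mem_ball, dist_zero_right, Real.norm_eq_abs] at hx
      rw [Real.norm_eq_abs, abs_div, abs_pow, abs_of_pos hΓ]
      exact div_le_div_of_nonneg_right (pow_le_pow_left₀ (abs_nonneg x) hx.le k) hΓ.le
  have hmem : z ∈ ball (0:ℝ) (|z| + 1) := by
    rw [mem_ball, dist_zero_right, Real.norm_eq_abs]; linarith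
  exact hcont.continuousAt (isOpen_ball.mem_nhds hmem)

open Set Filter in
private lemma exists_C1_extension {f : ℝ → ℝ} {b : ℝ} (hb : 0 < b)
    (hf : ContDiffOn ℝ 1 f (Set.Icc 0 b)) :
    ∃ F G : ℝ → ℝ, Continuous G ∧ (∀ y, HasDerivAt F (G y) y) ∧
      (∀ y ∈ Set.Icc 0 b, F y = f y) := by
  set g : ℝ → ℝ := derivWithin f (Set.Icc 0 b) with hg
  have hgcont : ContinuousOn g (Set.Icc 0 b) :=
    hf.continuousOn_derivWithin (uniqueDiffOn_Icc hb) le_rfl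
  have hfd : ∀ y ∈ Set.Icc 0 b, HasDerivWithinAt f (g y) (Set.Icc 0 b) y :=
    fun y hy => ((hf.differentiableOn one_ne_zero) y hy).hasDerivWithinAt
  set F : ℝ → ℝ := fun x =>
    if x < 0 then f 0 + g 0 * x else if x ≤ b then f x else f b + g b * (x - b) with hF
  set G : ℝ → ℝ := fun x => g (max 0 (min b x)) with hG
  have hFf : ∀ y ∈ Set.Icc 0 b, F y = f y := fun y hy => by
    simp only [hF, if_neg (not_lt.mpr hy.1), if_pos hy.2]
  have hGcont : Continuous G := by
    apply hgcont.comp_continuous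
      (continuous_const.max (continuous_const.min continuous_id))
    exact fun x => ⟨le_max_left _ _, max_le hb.le (min_le_left _ _)⟩
  refine ⟨F, G, hGcont, ?_, hFf⟩
  -- linear pieces
  have hlin0 : ∀ y : ℝ, HasDerivAt (fun x : ℝ => f 0 + g 0 * x) (g 0) y := by
    intro y
    have := ((hasDerivAt_id y).const_mul (g 0)).const_add (f 0)
    simpa using this
  have hlinb : ∀ y : ℝ, HasDerivAt (fun x : ℝ => f b + g b * (x - b)) (g b) y := by
    intro y
    have := (((hasDerivAt_id y).sub_const b).const_mul (g b)).const_add (f b)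
    simpa using this
  intro y
  rcases lt_trichotomy y 0 with hy | hy | hy
  · -- y < 0
    have hGy : G y = g 0 := by
      rw [hG]; simp only []
      rw [min_eq_right (le_of_lt (lt_trans hy hb)), max_eq_left hy.le]
    rw [hGy]
    refine (hlin0 y).congr_of_eventuallyEq ?_
    filter_upwards [Iio_mem_nhds hy] with x hx
    simp only [hF, if_pos (mem_Iio.mp hx)]
  · -- y = 0
    subst hy
    have hGy : G 0 = g 0 := by
      rw [hG]; simp only []
      rw [min_eq_right hb.le, max_self]
    rw [hGy]
    have hleft : HasDerivWithinAt F (g 0) (Iic 0) 0 := by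
      refine ((hlin0 0).hasDerivWithinAt).congr (fun x hx => ?_) ?_
      · rcases lt_or_eq_of_le (mem_Iic.mp hx) with h | h
        · simp only [hF, if_pos h]
        · subst h; simp only [hF, lt_irrefl, if_neg (lt_irrefl (0:ℝ)), if_pos hb.le]
          ring
      · simp only [hF, if_neg (lt_irrefl (0:ℝ)), if_pos hb.le]
        ring
    have hright : HasDerivWithinAt F (g 0) (Ici 0) 0 := by
      have h1 : HasDerivWithinAt F (g 0) (Icc 0 b) 0 :=
        (hfd 0 ⟨le_rfl, hb.le⟩).congr (fun x hx => hFf x hx) (hFf 0 ⟨le_rfl, hb.le⟩)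
      refine h1.mono_of_mem_nhdsWithin ?_
      rw [← Set.Ici_inter_Iic]
      exact Filter.inter_mem self_mem_nhdsWithin
        (mem_nhdsWithin_of_mem_nhds (Iic_mem_nhds hb))
    have := hleft.union hright
    rw [Set.Iic_union_Ici] at this
    exact this.hasDerivAt (by simp)
  · rcases lt_trichotomy y b with hyb | hyb | hyb
    · -- 0 < y < b
      have hGy : G y = g y := by
        rw [hG]; simp only []
        rw [min_eq_right hyb.le, max_eq_right hy.le]
      rw [hGy]
      have h1 : HasDerivAt f (g y) y :=
        (hfd y ⟨hy.le, hyb.le⟩).hasDerivAt (Icc_mem_nhds hy hyb)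
      refine h1.congr_of_eventuallyEq ?_
      filter_upwards [Ioo_mem_nhds hy hyb] with x hx
      exact hFf x ⟨hx.1.le, hx.2.le⟩
    · -- y = b
      have hGy : G y = g b := by
        rw [hG]; simp only []
        rw [hyb, min_self, max_eq_right hb.le]
      rw [hGy, hyb]
      have hleft : HasDerivWithinAt F (g b) (Iic b) b := by
        have h1 : HasDerivWithinAt F (g b) (Icc 0 b) b :=
          (hfd b ⟨hb.le, le_rfl⟩).congr (fun x hx => hFf x hx) (hFf b ⟨hb.le, le_rfl⟩)
        refine h1.mono_of_mem_nhdsWithin ?_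
        rw [← Set.Ici_inter_Iic]
        exact Filter.inter_mem
          (mem_nhdsWithin_of_mem_nhds (Ici_mem_nhds hb)) self_mem_nhdsWithin
      have hright : HasDerivWithinAt F (g b) (Ici b) b := by
        refine ((hlinb b).hasDerivWithinAt).congr (fun x hx => ?_) ?_
        · rcases lt_or_eq_of_le (mem_Ici.mp hx) with h | h
          · simp only [hF, if_neg (not_lt.mpr (le_of_lt (lt_of_le_of_lt hb.le h))),
              if_neg (not_le.mpr h)]
          · rw [← h]
            simp only [hF, if_neg (not_lt.mpr hb.le), if_pos le_rfl]
            ring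
        · simp only [hF, if_neg (not_lt.mpr hb.le), if_pos le_rfl]
          ring
      have := hleft.union hright
      rw [Set.Iic_union_Ici] at this
      exact this.hasDerivAt (by simp)
    · -- y > b
      have hGy : G y = g b := by
        rw [hG]; simp only []
        rw [min_eq_left hyb.le, max_eq_right hb.le]
      rw [hGy]
      refine (hlinb y).congr_of_eventuallyEq ?_
      filter_upwards [Ioi_mem_nhds hyb] with x hx
      have hx' : b < x := mem_Ioi.mp hx
      simp only [hF, if_neg (not_lt.mpr (le_of_lt (lt_of_le_of_lt hb.le hx'))),
        if_neg (not_le.mpr hx')]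

open Set Filter MeasureTheory Metric intervalIntegral in
private lemma deriv_conv_eq {f K : ℝ → ℝ} {b t : ℝ} (hb : 0 < b) (ht0 : 0 < t) (htb : t < b)
    (hf : ContDiffOn ℝ 1 f (Set.Icc 0 b)) (hK : Continuous K) :
    deriv (fun x => ∫ s in (0:ℝ)..x, f s * K (x - s)) t
      = (∫ s in (0:ℝ)..t, deriv f s * K (t - s)) + f 0 * K t := by
  obtain ⟨F, G, hGcont, hFd, hFf⟩ := exists_C1_extension hb hf
  have hFcont : Continuous F := continuous_iff_continuousAt.mpr fun y => (hFd y).continuousAt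
  have hcont2 : ∀ x : ℝ, Continuous (fun u => F (x - u) * K u) := fun x =>
    ((hFcont.comp (continuous_const.sub continuous_id)).mul hK)
  have hsplit : ∀ x : ℝ, (∫ u in (0:ℝ)..t, F (x - u) * K u) + (∫ u in t..x, F (x - u) * K u)
      = ∫ u in (0:ℝ)..x, F (x - u) * K u := fun x =>
    integral_add_adjacent_intervals ((hcont2 x).intervalIntegrable _ _)
      ((hcont2 x).intervalIntegrable _ _)
  obtain ⟨Cg, hCg⟩ := (isCompact_Icc (a := -(1:ℝ)) (b := t + 1)).exists_bound_of_continuousOn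
    hGcont.continuousOn
  -- (1) parametric part
  have hPd : HasDerivAt (fun x => ∫ u in (0:ℝ)..t, F (x - u) * K u)
      (∫ u in (0:ℝ)..t, G (t - u) * K u) t := by
    refine (intervalIntegral.hasDerivAt_integral_of_dominated_loc_of_deriv_le
      (F := fun x u => F (x - u) * K u) (F' := fun x u => G (x - u) * K u)
      (bound := fun u => Cg * ‖K u‖) (Metric.ball_mem_nhds t one_pos) ?_ ?_ ?_ ?_ ?_ ?_).2
    · exact Eventually.of_forall fun x => (hcont2 x).aestronglyMeasurable
    · exact (hcont2 t).intervalIntegrable _ _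
    · exact ((hGcont.comp (continuous_const.sub continuous_id)).mul hK).aestronglyMeasurable
    · refine Eventually.of_forall fun u hu x hx => ?_
      rw [Set.uIoc_of_le ht0.le] at hu
      rw [Metric.mem_ball, Real.dist_eq] at hx
      have hx' := abs_lt.mp hx
      rw [norm_mul]
      refine mul_le_mul_of_nonneg_right ?_ (norm_nonneg _)
      exact hCg _ ⟨by linarith [hu.2], by linarith [hu.1]⟩
    · exact (continuous_const.mul hK.norm).intervalIntegrable _ _
    · refine Eventually.of_forall fun u _ x _ => ?_
      have h1 : HasDerivAt (fun x : ℝ => F (x - u)) (G (x - u) * 1) x :=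
        (hFd (x - u)).comp x ((hasDerivAt_id x).sub_const u)
      simpa [mul_one] using h1.mul_const (K u)
  -- (2) moving endpoint part
  have hh2d : HasDerivAt (fun x => ∫ u in t..x, F (x - u) * K u) (F 0 * K t) t := by
    rw [hasDerivAt_iff_isLittleO, Asymptotics.isLittleO_iff]
    intro ε hε
    have hφ : ContinuousAt (fun p : ℝ × ℝ => F p.1 * K p.2) (0, t) :=
      ((hFcont.comp continuous_fst).mul (hK.comp continuous_snd)).continuousAt
    rw [Metric.continuousAt_iff] at hφ
    obtain ⟨δ, hδ0, hδ⟩ := hφ ε hε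
    filter_upwards [Metric.ball_mem_nhds t hδ0] with x hx
    rw [Metric.mem_ball, Real.dist_eq] at hx
    have heq : (∫ u in t..x, F (x - u) * K u) - (∫ u in t..t, F (t - u) * K u)
        - (x - t) • (F 0 * K t) = ∫ u in t..x, (F (x - u) * K u - F 0 * K t) := by
      rw [intervalIntegral.integral_sub ((hcont2 x).intervalIntegrable _ _)
        intervalIntegrable_const, intervalIntegral.integral_const,
        intervalIntegral.integral_same]
      abel
    rw [heq]
    have hbound : ∀ u ∈ Set.uIoc t x, ‖F (x - u) * K u - F 0 * K t‖ ≤ ε := by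
      intro u hu
      obtain ⟨h1, h2'⟩ : |u - t| ≤ |x - t| ∧ |x - u| ≤ |x - t| := by
        rcases le_total t x with h | h
        · rw [Set.uIoc_of_le h] at hu
          rw [abs_of_nonneg (by linarith : (0:ℝ) ≤ x - t),
            abs_of_nonneg (by linarith [hu.1] : (0:ℝ) ≤ u - t),
            abs_of_nonneg (by linarith [hu.2] : (0:ℝ) ≤ x - u)]
          exact ⟨by linarith [hu.2], by linarith [hu.1]⟩
        · rw [Set.uIoc_of_ge h] at hu
          rw [abs_of_nonpos (by linarith : x - t ≤ 0),
            abs_of_nonpos (by linarith [hu.2] : u - t ≤ 0),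
            abs_of_nonpos (by linarith [hu.1] : x - u ≤ 0)]
          exact ⟨by linarith [hu.1], by linarith [hu.2]⟩
      have hd : dist ((x - u, u) : ℝ × ℝ) ((0, t) : ℝ × ℝ) < δ := by
        rw [Prod.dist_eq]
        apply max_lt
        · rw [Real.dist_eq, sub_zero]; exact lt_of_le_of_lt h2' hx
        · rw [Real.dist_eq]; exact lt_of_le_of_lt h1 hx
      have := hδ hd
      rw [Real.dist_eq] at this
      rw [Real.norm_eq_abs]
      exact this.le
    calc ‖∫ u in t..x, (F (x - u) * K u - F 0 * K t)‖
        ≤ ε * |x - t| := intervalIntegral.norm_integral_le_of_norm_le_const hbound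
      _ = ε * ‖x - t‖ := by rw [Real.norm_eq_abs]
  have hGtd : HasDerivAt (fun x => ∫ u in (0:ℝ)..x, F (x - u) * K u)
      ((∫ u in (0:ℝ)..t, G (t - u) * K u) + F 0 * K t) t :=
    (hPd.add hh2d).congr_of_eventuallyEq (Eventually.of_forall fun x => (hsplit x).symm)
  have hinner : ∀ x ∈ Set.Ioo (0:ℝ) b,
      (∫ s in (0:ℝ)..x, f s * K (x - s)) = ∫ u in (0:ℝ)..x, F (x - u) * K u := by
    intro x hx
    have h1 := intervalIntegral.integral_comp_sub_left (a := (0:ℝ)) (b := x)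
      (fun u => f (x - u) * K u) x
    simp only [sub_sub_cancel, sub_zero, sub_self] at h1
    rw [h1]
    refine intervalIntegral.integral_congr fun u hu => ?_
    rw [Set.uIcc_of_le hx.1.le] at hu
    rw [hFf (x - u) ⟨by linarith [hu.2], by linarith [hu.1, hx.2.le]⟩]
  have hderiv : deriv (fun x => ∫ s in (0:ℝ)..x, f s * K (x - s)) t
      = (∫ u in (0:ℝ)..t, G (t - u) * K u) + F 0 * K t := by
    have hev : (fun x => ∫ s in (0:ℝ)..x, f s * K (x - s))
        =ᶠ[nhds t] fun x => ∫ u in (0:ℝ)..x, F (x - u) * K u :=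
      eventually_of_mem (Ioo_mem_nhds ht0 htb) hinner
    rw [hev.deriv_eq, hGtd.deriv]
  rw [hderiv]
  congr 1
  · have h1 := intervalIntegral.integral_comp_sub_left (a := (0:ℝ)) (b := t)
      (fun s => G s * K (t - s)) t
    simp only [sub_sub_cancel, sub_zero, sub_self] at h1
    rw [h1]
    refine intervalIntegral.integral_congr_ae (Eventually.of_forall fun s hs => ?_)
    rw [Set.uIoc_of_le ht0.le] at hs
    have hs1 : 0 < s := hs.1
    have hs2 : s < b := lt_of_le_of_lt hs.2 htb
    have hFef : f =ᶠ[nhds s] F := eventually_of_mem (Ioo_mem_nhds hs1 hs2)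
      fun y hy => (hFf y ⟨hy.1.le, hy.2.le⟩).symm
    rw [hFef.deriv_eq, (hFd s).deriv]
  · rw [hFf 0 ⟨le_rfl, hb.le⟩]

/-- Relation between the left ABR and ABC fractional derivatives (base point `0`). -/
theorem ABC_eq_ABR_sub_boundary (b α B : ℝ) (hb : 0 < b)
    (hα0 : 0 < α) (hα1 : α < 1) (hB : 0 < B) (f : ℝ → ℝ)
    (hf : ContDiffOn ℝ 1 f (Set.Icc 0 b)) :
    ∀ t ∈ Set.Ioo 0 b,
      ABCleft B α 0 f t
        = ABRleft B α 0 f t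
          - (B / (1 - α)) * f 0 * mittagLeffler α (-(α / (1 - α)) * t ^ α) := by
  intro t ht
  obtain ⟨ht0, htb⟩ := ht
  have hK : Continuous (fun u : ℝ => mittagLeffler α (-(α / (1 - α)) * u ^ α)) :=
    (ml_continuous hα0).comp (continuous_const.mul (Real.continuous_rpow_const hα0.le))
  have key := deriv_conv_eq (K := fun u : ℝ => mittagLeffler α (-(α / (1 - α)) * u ^ α))
    hb ht0 htb hf hK
  unfold ABCleft ABRleft
  rw [key]
  ring
end

section
/- (Reality of eigenvalues, discrete ABR Sturm–Liouville) Let a, b ∈ ℤ with b - a ≥ 2, α ∈ (0,1/2), p, q, r : {a,...,b} → ℝ with p > 0 and r > 0. If λ ∈ ℂ and x : {a,...,b} → ℂ is not identically zero on {a+1,...,b-1} and satisfies ^{ABR}_a∇^α (p(t) · ^{ABR}∇_b^α x(t)) + q(t)x(t) = λ r(t) x(t) for all t ∈ {a+1,...,b-1}, then λ ∈ ℝ. -/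
open ComplexConjugate

/-- Nabla discrete Mittag-Leffler function
`E_{\overline{α}}(λ, z) = Σ_{k=0}^∞ λ^k Γ(z+kα)/(Γ(z)Γ(kα+1))`. -/
noncomputable def dML (α lam z : ℝ) : ℝ :=
  ∑' k : ℕ, lam ^ k * (Real.Gamma (z + k * α) / Real.Gamma z) / Real.Gamma (k * α + 1)

/-- Left ABR nabla fractional difference (complex-valued functions). -/
noncomputable def ABRnablaLeftC (B α : ℝ) (a : ℤ) (g : ℤ → ℂ) (t : ℤ) : ℂ :=
  ((B / (1 - α) : ℝ) : ℂ) *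
    ((fun τ : ℤ => ∑ s ∈ Finset.Icc (a + 1) τ,
        g s * ((dML α (-(α / (1 - α))) ((τ : ℝ) - (s : ℝ) + 1) : ℝ) : ℂ)) t
     - (fun τ : ℤ => ∑ s ∈ Finset.Icc (a + 1) τ,
        g s * ((dML α (-(α / (1 - α))) ((τ : ℝ) - (s : ℝ) + 1) : ℝ) : ℂ)) (t - 1))

/-- Right ABR nabla fractional difference (complex-valued functions). -/
noncomputable def ABRnablaRightC (B α : ℝ) (b : ℤ) (f : ℤ → ℂ) (t : ℤ) : ℂ :=
  -((B / (1 - α) : ℝ) : ℂ) *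
    ((fun τ : ℤ => ∑ s ∈ Finset.Icc τ (b - 1),
        f s * ((dML α (-(α / (1 - α))) ((s : ℝ) - (τ : ℝ) + 1) : ℝ) : ℂ)) (t + 1)
     - (fun τ : ℤ => ∑ s ∈ Finset.Icc τ (b - 1),
        f s * ((dML α (-(α / (1 - α))) ((s : ℝ) - (τ : ℝ) + 1) : ℝ) : ℂ)) t)

/-- The discrete fractional Sturm–Liouville operator
`L₂ x(t) = ^{ABR}_a∇^α (p(t) ^{ABR}∇_b^α x(t)) + q(t) x(t)`. -/
noncomputable def dSLopC (B α : ℝ) (a b : ℤ) (p q : ℤ → ℝ) (x : ℤ → ℂ) (t : ℤ) : ℂ :=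
  ABRnablaLeftC B α a (fun s => (p s : ℂ) * ABRnablaRightC B α b x s) t + (q t : ℂ) * x t

lemma sum_extend_le (a b t : ℤ) (ht : t ≤ b - 1) (h : ℤ → ℂ) :
    ∑ s ∈ Finset.Icc (a + 1) t, h s
      = ∑ s ∈ Finset.Icc (a + 1) (b - 1), if s ≤ t then h s else 0 := by
  rw [Finset.sum_ite, Finset.sum_const_zero, add_zero]
  apply Finset.sum_congr _ (fun _ _ => rfl)
  ext s
  simp only [Finset.mem_filter, Finset.mem_Icc]
  omega

lemma sum_extend_ge (a b t : ℤ) (ht : a + 1 ≤ t) (h : ℤ → ℂ) :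
    ∑ s ∈ Finset.Icc t (b - 1), h s
      = ∑ s ∈ Finset.Icc (a + 1) (b - 1), if t ≤ s then h s else 0 := by
  rw [Finset.sum_ite, Finset.sum_const_zero, add_zero]
  apply Finset.sum_congr _ (fun _ _ => rfl)
  ext s
  simp only [Finset.mem_filter, Finset.mem_Icc]
  omega

lemma sbp (B α : ℝ) (a b : ℤ) (f g : ℤ → ℂ) :
    ∑ t ∈ Finset.Icc (a + 1) (b - 1), f t * ABRnablaLeftC B α a g t
      = ∑ t ∈ Finset.Icc (a + 1) (b - 1), g t * ABRnablaRightC B α b f t := by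
  have key : ∀ t ∈ Finset.Icc (a + 1) (b - 1),
      f t * ABRnablaLeftC B α a g t
        = ∑ s ∈ Finset.Icc (a + 1) (b - 1),
            ((B / (1 - α) : ℝ) : ℂ) * f t *
              ((if s ≤ t then g s * ((dML α (-(α / (1 - α))) ((t : ℝ) - (s : ℝ) + 1) : ℝ) : ℂ) else 0)
               - (if s ≤ t - 1 then g s * ((dML α (-(α / (1 - α))) (((t : ℤ) - 1 : ℤ) - (s : ℝ) + 1) : ℝ) : ℂ) else 0)) := by
    intro t ht
    simp only [Finset.mem_Icc] at ht
    rw [ABRnablaLeftC]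
    simp only []
    rw [sum_extend_le a b t ht.2 _, sum_extend_le a b (t - 1) (by omega) _]
    rw [← Finset.sum_sub_distrib, Finset.mul_sum, Finset.mul_sum]
    apply Finset.sum_congr rfl
    intro s hs
    push_cast
    ring
  have key2 : ∀ t ∈ Finset.Icc (a + 1) (b - 1),
      g t * ABRnablaRightC B α b f t
        = ∑ s ∈ Finset.Icc (a + 1) (b - 1),
            ((B / (1 - α) : ℝ) : ℂ) * g t *
              ((if t ≤ s then f s * ((dML α (-(α / (1 - α))) ((s : ℝ) - (t : ℝ) + 1) : ℝ) : ℂ) else 0)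
               - (if t + 1 ≤ s then f s * ((dML α (-(α / (1 - α))) ((s : ℝ) - (((t : ℤ) + 1 : ℤ) : ℝ) + 1) : ℝ) : ℂ) else 0)) := by
    intro t ht
    simp only [Finset.mem_Icc] at ht
    rw [ABRnablaRightC]
    simp only []
    rw [sum_extend_ge a b (t + 1) (by omega) _, sum_extend_ge a b t ht.1 _]
    rw [← neg_sub, ← Finset.sum_sub_distrib, Finset.mul_sum, Finset.mul_sum]
    apply Finset.sum_congr rfl
    intro s hs
    push_cast
    ring
  rw [Finset.sum_congr rfl key, Finset.sum_congr rfl key2, Finset.sum_comm]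
  apply Finset.sum_congr rfl
  intro s hs
  apply Finset.sum_congr rfl
  intro t ht
  by_cases h1 : s ≤ t
  · by_cases h2 : s ≤ t - 1
    · rw [if_pos h1, if_pos h2, if_pos h1, if_pos (by omega : s + 1 ≤ t)]
      push_cast
      ring
    · have hts : s = t := by omega
      subst hts
      rw [if_pos le_rfl, if_neg h2, if_pos le_rfl, if_neg (by omega)]
      ring
  · rw [if_neg h1, if_neg (by omega : ¬ s ≤ t - 1), if_neg h1, if_neg (by omega : ¬ s + 1 ≤ t)]
    ring

lemma conj_ABRright (B α : ℝ) (b : ℤ) (x : ℤ → ℂ) (t : ℤ) :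
    ABRnablaRightC B α b (fun s => conj (x s)) t = conj (ABRnablaRightC B α b x t) := by
  simp only [ABRnablaRightC, map_mul, map_sub, map_sum, map_neg, Complex.conj_ofReal]

/-- Reality of eigenvalues for the discrete ABR fractional Sturm–Liouville equation. -/
theorem dSL_eigenvalues_real (a b : ℤ) (hab : 2 ≤ b - a) (α B : ℝ)
    (hα0 : 0 < α) (hα2 : α < 1 / 2) (hB : 0 < B)
    (p q r : ℤ → ℝ) (hppos : ∀ t, 0 < p t) (hrpos : ∀ t, 0 < r t)
    (lam : ℂ) (x : ℤ → ℂ)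
    (hxnt : ∃ t ∈ Finset.Icc (a + 1) (b - 1), x t ≠ 0)
    (heq : ∀ t ∈ Finset.Icc (a + 1) (b - 1),
      dSLopC B α a b p q x t = lam * (r t : ℂ) * x t) :
    lam.im = 0 := by
  set I := Finset.Icc (a + 1) (b - 1) with hI
  set W : ℤ → ℂ := ABRnablaRightC B α b x with hW
  set R : ℝ := ∑ t ∈ I, r t * Complex.normSq (x t) with hR
  -- the quadratic form is real
  have hreal : (∑ t ∈ I, conj (x t) * dSLopC B α a b p q x t).im = 0 := by
    have e1 : ∑ t ∈ I, conj (x t) * dSLopC B α a b p q x t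
        = ∑ t ∈ I, ((fun s => (p s : ℂ) * W s) t * ABRnablaRightC B α b (fun s => conj (x s)) t)
          + ∑ t ∈ I, (q t : ℂ) * (conj (x t) * x t) := by
      simp only [dSLopC, mul_add]
      rw [Finset.sum_add_distrib, sbp B α a b (fun s => conj (x s)) (fun s => (p s : ℂ) * W s)]
      congr 1
      exact Finset.sum_congr rfl fun t _ => by ring
    have e2 : ∑ t ∈ I, conj (x t) * dSLopC B α a b p q x t
        = ((∑ t ∈ I, (p t * Complex.normSq (W t) + q t * Complex.normSq (x t)) : ℝ) : ℂ) := by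
      rw [e1]
      push_cast
      rw [← Finset.sum_add_distrib]
      refine Finset.sum_congr rfl fun t _ => ?_
      rw [conj_ABRright, ← Complex.mul_conj, ← Complex.mul_conj]
      ring
    rw [e2, Complex.ofReal_im]
  -- the quadratic form equals lam * R
  have h2 : ∑ t ∈ I, conj (x t) * dSLopC B α a b p q x t = lam * (R : ℂ) := by
    rw [Finset.sum_congr rfl fun t ht => by rw [heq t ht]]
    rw [hR]
    push_cast
    rw [Finset.mul_sum]
    refine Finset.sum_congr rfl fun t _ => ?_
    rw [← Complex.mul_conj]
    ring
  have hRpos : 0 < R := by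
    obtain ⟨t₀, ht₀, hx₀⟩ := hxnt
    refine Finset.sum_pos' (fun t _ => ?_) ⟨t₀, ht₀, ?_⟩
    · exact mul_nonneg (hrpos t).le (Complex.normSq_nonneg _)
    · exact mul_pos (hrpos t₀) (Complex.normSq_pos.mpr hx₀)
  rw [h2] at hreal
  simp only [Complex.mul_im, Complex.ofReal_re, Complex.ofReal_im, mul_zero, zero_add] at hreal
  rcases mul_eq_zero.mp hreal with h | h
  · exact h
  · exact absurd h (ne_of_gt hRpos)
end
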